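/- Fix ℓ > 0 and α ∈ (0, π/2), and let r = p/q with p a nonnegative integer, q a positive ODD integer and gcd(p,q) = 1 (p = 0, q = 1 allowed). If there exists θ* ∈ (arctan(2ℓ + tan α), π/2) with ρ(F_{ℓ,α,θ*}) = r, then the set {θ ∈ (arctan(2ℓ + tan α), π/2) : ρ(F_{ℓ,α,θ}) = r} is an interval with nonempty interior; moreover, for every such θ the circle map is not topologically conjugate to a rotation, i.e., there is no continuous strictly increasing H : ℝ → ℝ with H(x+1) = H(x)+1 and H(F_{ℓ,α,θ}(x)) = H(x) + r for all x. -/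

import Mathlib

open Real Filter Set

/-- Rotation number of a lift `T` of a circle homeomorphism,
defined as the limit of `T^[n] 0 / n` (which exists and is independent
of the base point for lifts of orientation-preserving circle homeos). -/
noncomputable def rotationNumber (T : ℝ → ℝ) : ℝ :=
  limUnder atTop (fun n : ℕ => T^[n] 0 / (n : ℝ))

/-- The expansion factor `Λ = sin(θ+α)/sin(θ−α)`. -/
noncomputable def Lam (α θ : ℝ) : ℝ := Real.sin (θ + α) / Real.sin (θ - α)

/-- The break point of increase `a₀ = (tan θ − 2ℓ)/(2 tan θ)`. -/
noncomputable def brk0 (ℓ θ : ℝ) : ℝ := (Real.tan θ - 2 * ℓ) / (2 * Real.tan θ)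

/-- The break point of decrease `a₁ = −(2ℓ + tan α)/(2 tan θ)`. -/
noncomputable def brk1 (ℓ α θ : ℝ) : ℝ := -(2 * ℓ + Real.tan α) / (2 * Real.tan θ)

/-- The two-piece definition of the lift on the fundamental interval `[a₁, a₁+1)`. -/
noncomputable def Ftrap0 (ℓ α θ x : ℝ) : ℝ :=
  if x ≤ brk0 ℓ θ then -brk1 ℓ α θ + (Lam α θ)⁻¹ * (x - brk1 ℓ α θ)
  else 1 - brk0 ℓ θ + Lam α θ * (x - brk0 ℓ θ)

/-- The lift `F_{ℓ,α,θ} : ℝ → ℝ` of the Poincaré map of the internal-wave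
billiard in a rectangular trapezoid: it is given by the two-piece formula on
`[a₁, a₁+1)` and extended by `F(x+k) = F(x)+k` for `k ∈ ℤ`. -/
noncomputable def Ftrap (ℓ α θ x : ℝ) : ℝ :=
  Ftrap0 ℓ α θ (x - ⌊x - brk1 ℓ α θ⌋) + ⌊x - brk1 ℓ α θ⌋

namespace Stmt8Aux

/-- Standing hypotheses on the parameters. -/
structure Fact (ℓ α θ : ℝ) : Prop where
  hl : 0 < ℓ
  hα0 : 0 < α
  hα2 : α < π / 2
  hθα : α < θ
  hθ2 : θ < π / 2
  hlt : 2 * ℓ + Real.tan α < Real.tan θ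

variable {ℓ α θ : ℝ}

lemma mkFact (hℓ : 0 < ℓ) (hα : 0 < α) (hα2 : α < π / 2)
    (hmem : θ ∈ Set.Ioo (Real.arctan (2 * ℓ + Real.tan α)) (π / 2)) : Fact ℓ α θ := by
  obtain ⟨h1, h2⟩ := hmem
  have hθIoo : θ ∈ Set.Ioo (-(π / 2)) (π / 2) :=
    ⟨(Real.neg_pi_div_two_lt_arctan _).trans h1, h2⟩
  have hαIoo : α ∈ Set.Ioo (-(π / 2)) (π / 2) := ⟨by linarith [Real.pi_pos], hα2⟩
  have hu : 0 < Real.tan α := by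
    rw [Real.tan_eq_sin_div_cos]
    exact div_pos (Real.sin_pos_of_pos_of_lt_pi hα (by linarith [Real.pi_pos]))
      (Real.cos_pos_of_mem_Ioo hαIoo)
  have hlt : 2 * ℓ + Real.tan α < Real.tan θ := by
    have := Real.strictMonoOn_tan (Real.arctan_mem_Ioo _) hθIoo h1
    rwa [Real.tan_arctan] at this
  have hθα : α < θ := by
    by_contra hcon
    push_neg at hcon
    have := Real.strictMonoOn_tan.monotoneOn hθIoo hαIoo hcon
    linarith
  exact ⟨hℓ, hα, hα2, hθα, h2, hlt⟩

lemma Fact.cosα (h : Fact ℓ α θ) : 0 < Real.cos α :=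
  Real.cos_pos_of_mem_Ioo ⟨by linarith [Real.pi_pos, h.hα0], h.hα2⟩

lemma Fact.u_pos (h : Fact ℓ α θ) : 0 < Real.tan α := by
  rw [Real.tan_eq_sin_div_cos]
  exact div_pos (Real.sin_pos_of_pos_of_lt_pi h.hα0 (by linarith [Real.pi_pos, h.hα2])) h.cosα

lemma Fact.t_pos (h : Fact ℓ α θ) : 0 < Real.tan θ := by
  have := h.u_pos; have := h.hl; linarith [h.hlt]

lemma Fact.tu (h : Fact ℓ α θ) : Real.tan α < Real.tan θ := by
  have := h.hl; linarith [h.hlt]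

lemma Fact.cosθ (h : Fact ℓ α θ) : 0 < Real.cos θ :=
  Real.cos_pos_of_mem_Ioo ⟨by linarith [Real.pi_pos, h.hα0, h.hθα], h.hθ2⟩

lemma Fact.sinsub (h : Fact ℓ α θ) : 0 < Real.sin (θ - α) :=
  Real.sin_pos_of_pos_of_lt_pi (by linarith [h.hθα])
    (by linarith [Real.pi_pos, h.hθ2, h.hα0])

lemma Fact.lam_eq (h : Fact ℓ α θ) :
    Lam α θ = (Real.tan θ + Real.tan α) / (Real.tan θ - Real.tan α) := by
  have hc : Real.cos θ ≠ 0 := h.cosθ.ne'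
  have ha : Real.cos α ≠ 0 := h.cosα.ne'
  have h1 : Real.sin (θ + α) = Real.cos θ * Real.cos α * (Real.tan θ + Real.tan α) := by
    rw [Real.sin_add, Real.tan_eq_sin_div_cos, Real.tan_eq_sin_div_cos]
    field_simp
  have h2 : Real.sin (θ - α) = Real.cos θ * Real.cos α * (Real.tan θ - Real.tan α) := by
    rw [Real.sin_sub, Real.tan_eq_sin_div_cos, Real.tan_eq_sin_div_cos]
    field_simp
  rw [Lam, h1, h2, mul_div_mul_left _ _ (mul_ne_zero hc ha)]

lemma Fact.lam1 (h : Fact ℓ α θ) : 1 < Lam α θ := by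
  rw [h.lam_eq, lt_div_iff₀ (by linarith [h.tu])]
  linarith [h.u_pos]

lemma Fact.lam0 (h : Fact ℓ α θ) : 0 < Lam α θ := lt_trans one_pos h.lam1

lemma Fact.b1neg (h : Fact ℓ α θ) : brk1 ℓ α θ < 0 := by
  rw [brk1]
  apply div_neg_of_neg_of_pos
  · linarith [h.u_pos, h.hl]
  · linarith [h.t_pos]

lemma Fact.b0pos (h : Fact ℓ α θ) : 0 < brk0 ℓ θ := by
  rw [brk0]
  exact div_pos (by linarith [h.hlt, h.u_pos]) (by linarith [h.t_pos])

lemma Fact.b0lt (h : Fact ℓ α θ) : brk0 ℓ θ < brk1 ℓ α θ + 1 := by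
  have ht : Real.tan θ ≠ 0 := h.t_pos.ne'
  have key : brk1 ℓ α θ + 1 - brk0 ℓ θ = (Real.tan θ - Real.tan α) / (2 * Real.tan θ) := by
    rw [brk1, brk0]
    field_simp
    ring
  have : 0 < (Real.tan θ - Real.tan α) / (2 * Real.tan θ) :=
    div_pos (by linarith [h.tu]) (by linarith [h.t_pos])
  linarith [key ▸ this]

lemma Fact.K1 (h : Fact ℓ α θ) :
    -brk1 ℓ α θ + (Lam α θ)⁻¹ * (brk0 ℓ θ - brk1 ℓ α θ) = 1 - brk0 ℓ θ := by
  have ht : Real.tan θ ≠ 0 := h.t_pos.ne'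
  have htu : Real.tan θ + Real.tan α ≠ 0 := by linarith [h.tu, h.u_pos, h.t_pos]
  rw [h.lam_eq, inv_div, brk0, brk1]
  field_simp
  ring

lemma Fact.K2 (h : Fact ℓ α θ) :
    1 - brk0 ℓ θ + Lam α θ * (brk1 ℓ α θ + 1 - brk0 ℓ θ) = 1 - brk1 ℓ α θ := by
  have ht : Real.tan θ ≠ 0 := h.t_pos.ne'
  have htu : Real.tan θ - Real.tan α ≠ 0 := by linarith [h.tu]
  rw [h.lam_eq, brk0, brk1]
  field_simp
  ring

lemma Fact.F0_b1 (h : Fact ℓ α θ) : Ftrap0 ℓ α θ (brk1 ℓ α θ) = -brk1 ℓ α θ := by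
  rw [Ftrap0, if_pos (le_of_lt (h.b1neg.trans h.b0pos))]
  ring

lemma Fact.F0_b1' (h : Fact ℓ α θ) : Ftrap0 ℓ α θ (brk1 ℓ α θ + 1) = 1 - brk1 ℓ α θ := by
  rw [Ftrap0, if_neg (not_le.2 h.b0lt)]
  exact h.K2

lemma Fact.F0_mono (h : Fact ℓ α θ) : StrictMono (Ftrap0 ℓ α θ) := by
  have hΛ1 := h.lam1
  have hΛ0 := h.lam0
  have hs0 : 0 < (Lam α θ)⁻¹ := inv_pos.2 hΛ0
  have hK1 := h.K1
  intro x y hxy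
  rw [Ftrap0, Ftrap0]
  split_ifs with h1 h2 h2
  · have := mul_lt_mul_of_pos_left (show x - brk1 ℓ α θ < y - brk1 ℓ α θ by linarith) hs0
    linarith
  · have hxb : (Lam α θ)⁻¹ * (x - brk1 ℓ α θ) ≤ (Lam α θ)⁻¹ * (brk0 ℓ θ - brk1 ℓ α θ) :=
      mul_le_mul_of_nonneg_left (by linarith) hs0.le
    have hy : 0 < Lam α θ * (y - brk0 ℓ θ) :=
      mul_pos hΛ0 (sub_pos.2 (not_le.1 h2))
    linarith
  · exact absurd (hxy.le.trans h2) h1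
  · have := mul_lt_mul_of_pos_left (show x - brk0 ℓ θ < y - brk0 ℓ θ by linarith) hΛ0
    linarith

lemma Ftrap_add_int (ℓ α θ x : ℝ) (k : ℤ) :
    Ftrap ℓ α θ (x + k) = Ftrap ℓ α θ x + k := by
  rw [Ftrap, Ftrap, show x + (k : ℝ) - brk1 ℓ α θ = x - brk1 ℓ α θ + k by ring,
    Int.floor_add_intCast]
  push_cast
  rw [show x + (k : ℝ) - ((⌊x - brk1 ℓ α θ⌋ : ℝ) + k) = x - ⌊x - brk1 ℓ α θ⌋ by ring]
  ring

lemma Ftrap_eq_of_mem {x : ℝ} (h1 : brk1 ℓ α θ ≤ x) (h2 : x < brk1 ℓ α θ + 1) :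
    Ftrap ℓ α θ x = Ftrap0 ℓ α θ x := by
  have hfl : ⌊x - brk1 ℓ α θ⌋ = 0 :=
    Int.floor_eq_iff.2 ⟨by push_cast; linarith, by push_cast; linarith⟩
  rw [Ftrap, hfl]
  norm_num

lemma Fact.Ftrap_strictMono (h : Fact ℓ α θ) : StrictMono (Ftrap ℓ α θ) := by
  have hmono := h.F0_mono
  intro x y hxy
  rw [Ftrap, Ftrap]
  have hkm : ⌊x - brk1 ℓ α θ⌋ ≤ ⌊y - brk1 ℓ α θ⌋ := Int.floor_mono (by linarith)
  rcases eq_or_lt_of_le hkm with he | hlt2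
  · rw [he]
    exact add_lt_add_of_lt_of_le (hmono (show x - (⌊y - brk1 ℓ α θ⌋ : ℝ) < y - (⌊y - brk1 ℓ α θ⌋ : ℝ) by
      have : ((⌊x - brk1 ℓ α θ⌋ : ℤ) : ℝ) = ((⌊y - brk1 ℓ α θ⌋ : ℤ) : ℝ) := by rw [he]
      linarith)) le_rfl
  · have h1 : x - (⌊x - brk1 ℓ α θ⌋ : ℝ) < brk1 ℓ α θ + 1 := by
      have := Int.lt_floor_add_one (x - brk1 ℓ α θ)
      push_cast at this
      linarith
    have h2 : brk1 ℓ α θ ≤ y - (⌊y - brk1 ℓ α θ⌋ : ℝ) := by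
      have := Int.floor_le (y - brk1 ℓ α θ)
      linarith
    have e1 : Ftrap0 ℓ α θ (x - ⌊x - brk1 ℓ α θ⌋) < 1 - brk1 ℓ α θ := by
      rw [← h.F0_b1']
      exact hmono (by linarith)
    have e2 : -brk1 ℓ α θ ≤ Ftrap0 ℓ α θ (y - ⌊y - brk1 ℓ α θ⌋) := by
      rw [← h.F0_b1]
      exact hmono.monotone h2
    have hk1 : ((⌊x - brk1 ℓ α θ⌋ : ℤ) : ℝ) + 1 ≤ ((⌊y - brk1 ℓ α θ⌋ : ℤ) : ℝ) := by
      exact_mod_cast hlt2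
    linarith

lemma Fact.Ftrap0_cont (h : Fact ℓ α θ) : Continuous (Ftrap0 ℓ α θ) := by
  unfold Ftrap0
  apply Continuous.if_le
  · fun_prop
  · fun_prop
  · exact continuous_id
  · exact continuous_const
  · intro x hx
    rw [hx]
    simp only [sub_self, mul_zero, add_zero]
    exact h.K1

lemma Fact.Ftrap_cont (h : Fact ℓ α θ) : Continuous (Ftrap ℓ α θ) := by
  have hF0 := h.Ftrap0_cont
  set b := brk1 ℓ α θ with hbdef
  set g : ℝ → ℝ := fun s => Ftrap0 ℓ α θ (b + s) - (b + s) with hgdef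
  have hgc : Continuous g := by
    apply Continuous.sub
    · exact hF0.comp (continuous_const.add continuous_id)
    · exact continuous_const.add continuous_id
  have hg01 : g 0 = g 1 := by
    simp only [hgdef, add_zero]
    rw [hbdef, h.F0_b1, h.F0_b1']
    ring
  have key : Continuous ((g ∘ Int.fract) ∘ fun x : ℝ => x - b) :=
    (hgc.continuousOn.comp_fract'' hg01).comp (continuous_id.sub continuous_const)
  have heq : Ftrap ℓ α θ = fun x : ℝ => x + ((g ∘ Int.fract) ∘ fun x : ℝ => x - b) x := by
    funext x
    simp only [Function.comp_apply, hgdef, Int.fract]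
    rw [show b + (x - b - (⌊x - b⌋ : ℝ)) = x - ⌊x - b⌋ by ring, Ftrap, ← hbdef]
    ring
  rw [heq]
  exact continuous_id.add key

/-- The lift as a `CircleDeg1Lift`. -/
noncomputable def Flift (h : Fact ℓ α θ) : CircleDeg1Lift :=
  ⟨⟨Ftrap ℓ α θ, h.Ftrap_strictMono.monotone⟩, fun x => by
    simpa using Ftrap_add_int ℓ α θ x 1⟩

lemma Flift_coe (h : Fact ℓ α θ) : ⇑(Flift h) = Ftrap ℓ α θ := rfl

lemma rot_eq (h : Fact ℓ α θ) :
    rotationNumber (Ftrap ℓ α θ) = (Flift h).translationNumber := by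
  have ht := (Flift h).tendsto_translation_number₀
  have hfun : (fun n : ℕ => ((Flift h ^ n) 0 : ℝ) / n)
      = fun n : ℕ => (Ftrap ℓ α θ)^[n] 0 / (n : ℝ) := by
    funext n
    rw [CircleDeg1Lift.coe_pow, Flift_coe]
  rw [hfun] at ht
  exact ht.limUnder_eq

section Anti

variable {θ₁ θ₂ : ℝ}

lemma tan_mono (h1 : Fact ℓ α θ₁) (h2 : Fact ℓ α θ₂) (hθ : θ₁ ≤ θ₂) :
    Real.tan θ₁ ≤ Real.tan θ₂ := by
  have m1 : θ₁ ∈ Set.Ioo (-(π / 2)) (π / 2) :=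
    ⟨by linarith [Real.pi_pos, h1.hα0, h1.hθα], h1.hθ2⟩
  have m2 : θ₂ ∈ Set.Ioo (-(π / 2)) (π / 2) :=
    ⟨by linarith [Real.pi_pos, h2.hα0, h2.hθα], h2.hθ2⟩
  exact Real.strictMonoOn_tan.monotoneOn m1 m2 hθ

set_option maxHeartbeats 1000000 in
lemma Ftrap_anti (h1 : Fact ℓ α θ₁) (h2 : Fact ℓ α θ₂) (hθ : θ₁ ≤ θ₂) (x : ℝ) :
    Ftrap ℓ α θ₂ x ≤ Ftrap ℓ α θ₁ x := by
  have htan := tan_mono h1 h2 hθ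
  have ht1 := h1.t_pos
  have ht2 := h2.t_pos
  have hu := h1.u_pos
  -- monotonicity of the breakpoints and slopes
  have hb : brk1 ℓ α θ₁ ≤ brk1 ℓ α θ₂ := by
    rw [brk1, brk1, neg_div, neg_div, neg_le_neg_iff]
    apply div_le_div_of_nonneg_left (by linarith [h1.hl]) (by linarith) (by linarith)
  have ha : brk0 ℓ θ₁ ≤ brk0 ℓ θ₂ := by
    rw [brk0, brk0, div_le_div_iff₀ (by linarith) (by linarith)]
    nlinarith [h1.hl]
  have hL : Lam α θ₂ ≤ Lam α θ₁ := by
    rw [h1.lam_eq, h2.lam_eq, div_le_div_iff₀ (by linarith [h2.tu]) (by linarith [h1.tu])]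
    nlinarith
  have hs : (Lam α θ₁)⁻¹ ≤ (Lam α θ₂)⁻¹ := by
    apply inv_anti₀ h2.lam0 hL
  have hL1 := h1.lam1
  have hL2 := h2.lam1
  have hs1 : 0 < (Lam α θ₁)⁻¹ := inv_pos.2 h1.lam0
  have hs2 : 0 < (Lam α θ₂)⁻¹ := inv_pos.2 h2.lam0
  have hs1' : (Lam α θ₁)⁻¹ < 1 := by
    rw [inv_lt_one_iff₀]; right; exact hL1
  have hs2' : (Lam α θ₂)⁻¹ < 1 := by
    rw [inv_lt_one_iff₀]; right; exact hL2
  have hK11 := h1.K1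
  have hK12 := h2.K1
  have hK22 := h2.K2
  have hb1n := h1.b1neg
  have hb2n := h2.b1neg
  have ha1p := h1.b0pos
  have ha2p := h2.b0pos
  have hd1 := h1.b0lt
  have hd2 := h2.b0lt
  -- reduce to the fundamental domain of θ₂
  set k := ⌊x - brk1 ℓ α θ₂⌋ with hkdef
  have hy1 : brk1 ℓ α θ₂ ≤ x - (k : ℝ) := by
    have := Int.floor_le (x - brk1 ℓ α θ₂); linarith
  have hy2 : x - (k : ℝ) < brk1 ℓ α θ₂ + 1 := by
    have := Int.lt_floor_add_one (x - brk1 ℓ α θ₂); linarith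
  have hxeq : x = (x - (k : ℝ)) + (k : ℝ) := by ring
  rw [hxeq, Ftrap_add_int, Ftrap_add_int]
  have hmain : Ftrap ℓ α θ₂ (x - (k : ℝ)) ≤ Ftrap ℓ α θ₁ (x - (k : ℝ)) := by
    set y := x - (k : ℝ) with hy
    have e2 : Ftrap ℓ α θ₂ y = Ftrap0 ℓ α θ₂ y := Ftrap_eq_of_mem hy1 hy2
    rcases lt_or_ge y (brk1 ℓ α θ₁ + 1) with hc | hc
    · -- same fundamental domain for θ₁
      have e1 : Ftrap ℓ α θ₁ y = Ftrap0 ℓ α θ₁ y := Ftrap_eq_of_mem (by linarith) hc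
      rw [e1, e2, Ftrap0, Ftrap0]
      split_ifs with c2 c1 c1
      · -- region 1
        linarith [mul_nonneg (sub_nonneg.2 hs) (sub_nonneg.2 c1),
          mul_nonneg hs2.le (sub_nonneg.2 ha)]
      · -- region 2
        linarith [mul_nonneg (by linarith : (0:ℝ) ≤ Lam α θ₁ - (Lam α θ₂)⁻¹)
            (by linarith [not_le.1 c1] : (0:ℝ) ≤ y - brk0 ℓ θ₁),
          mul_nonneg hs2.le (sub_nonneg.2 ha)]
      · -- impossible
        exact absurd (c1.trans ha) c2
      · -- region 3
        linarith [mul_nonneg (sub_nonneg.2 hL) (by linarith [not_le.1 c2] : (0:ℝ) ≤ y - brk0 ℓ θ₂),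
          mul_nonneg h1.lam0.le (sub_nonneg.2 ha)]
    · -- shifted fundamental domain for θ₁
      have hfl : ⌊y - brk1 ℓ α θ₁⌋ = 1 := by
        apply Int.floor_eq_iff.2
        constructor
        · push_cast; linarith
        · push_cast; linarith
      have e1 : Ftrap ℓ α θ₁ y = Ftrap0 ℓ α θ₁ (y - 1) + 1 := by
        rw [Ftrap, hfl]; norm_num
      have hbr : y - 1 ≤ brk0 ℓ θ₁ := by linarith
      rw [e1, e2, Ftrap0, Ftrap0, if_pos hbr]
      split_ifs with c2
      · -- region 4
        linarith [mul_nonneg (sub_nonneg.2 hs) (by linarith : (0:ℝ) ≤ brk0 ℓ θ₂ - y),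
          mul_nonneg hs1.le (by linarith : (0:ℝ) ≤ brk0 ℓ θ₂ - 1 - brk1 ℓ α θ₁)]
      · -- region 5
        linarith [mul_nonneg (by linarith : (0:ℝ) ≤ Lam α θ₂ - (Lam α θ₁)⁻¹)
            (by linarith : (0:ℝ) ≤ brk1 ℓ α θ₂ + 1 - y),
          mul_nonneg (by linarith : (0:ℝ) ≤ 1 + (Lam α θ₁)⁻¹) (sub_nonneg.2 hb)]
  linarith

end Anti

section Local

/-- Away from the (shifted) break points, `Ftrap` is locally affine with slope `Λ^{±1}`. -/
lemma Ftrap_loc (h : Fact ℓ α θ) {z : ℝ} (h0 : ∀ k : ℤ, z ≠ brk0 ℓ θ + k)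
    (h1 : ∀ k : ℤ, z ≠ brk1 ℓ α θ + k) :
    ∃ e : ℤ, (e = 1 ∨ e = -1) ∧
      ∀ᶠ y in nhds z, Ftrap ℓ α θ y = Ftrap ℓ α θ z + Lam α θ ^ e * (y - z) := by
  have hb0 := h.b0lt
  have hbn := h.b1neg
  have hap := h.b0pos
  set k := ⌊z - brk1 ℓ α θ⌋ with hkdef
  have hk1 : (k : ℝ) ≤ z - brk1 ℓ α θ := Int.floor_le _
  have hk2 : z - brk1 ℓ α θ < k + 1 := Int.lt_floor_add_one _
  have hzb : brk1 ℓ α θ + k < z := by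
    rcases lt_or_eq_of_le hk1 with hlt | heq
    · linarith
    · exact absurd (by linarith) (h1 k)
  have hza : z - (k : ℝ) ≠ brk0 ℓ θ := fun hc => (h0 k) (by linarith)
  have formula : ∀ w : ℝ, brk1 ℓ α θ + k < w → w < brk1 ℓ α θ + k + 1 →
      Ftrap ℓ α θ w = Ftrap0 ℓ α θ (w - k) + k := by
    intro w hw1 hw2
    have hfl : ⌊w - brk1 ℓ α θ⌋ = k := by
      apply Int.floor_eq_iff.2
      constructor
      · linarith
      · push_cast; linarith
    rw [Ftrap, hfl]
  rcases lt_or_gt_of_ne hza with hlt | hgt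
  · refine ⟨-1, Or.inr rfl, ?_⟩
    have hmem : Set.Ioo (brk1 ℓ α θ + k) (brk0 ℓ θ + k) ∈ nhds z :=
      isOpen_Ioo.mem_nhds ⟨hzb, by linarith⟩
    have ez : Ftrap ℓ α θ z
        = -brk1 ℓ α θ + (Lam α θ)⁻¹ * (z - k - brk1 ℓ α θ) + k := by
      rw [formula z hzb (by linarith), Ftrap0, if_pos hlt.le]
    filter_upwards [hmem] with y hy
    have ey : Ftrap ℓ α θ y
        = -brk1 ℓ α θ + (Lam α θ)⁻¹ * (y - k - brk1 ℓ α θ) + k := by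
      rw [formula y hy.1 (by linarith [hy.2]), Ftrap0,
        if_pos (by linarith [hy.2] : y - (k : ℝ) ≤ brk0 ℓ θ)]
    rw [ey, ez, zpow_neg_one]
    ring
  · refine ⟨1, Or.inl rfl, ?_⟩
    have hmem : Set.Ioo (brk0 ℓ θ + k) (brk1 ℓ α θ + k + 1) ∈ nhds z :=
      isOpen_Ioo.mem_nhds ⟨by linarith, by linarith⟩
    have ez : Ftrap ℓ α θ z
        = 1 - brk0 ℓ θ + Lam α θ * (z - k - brk0 ℓ θ) + k := by
      rw [formula z hzb (by linarith), Ftrap0, if_neg (not_le.2 hgt)]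
    filter_upwards [hmem] with y hy
    have ey : Ftrap ℓ α θ y
        = 1 - brk0 ℓ θ + Lam α θ * (y - k - brk0 ℓ θ) + k := by
      rw [formula y (by linarith [hy.1]) hy.2, Ftrap0,
        if_neg (not_le.2 (by linarith [hy.1] : brk0 ℓ θ < y - (k : ℝ)))]
    rw [ey, ez, zpow_one]
    ring

lemma Ftrap_hasDeriv (h : Fact ℓ α θ) {z : ℝ} (h0 : ∀ k : ℤ, z ≠ brk0 ℓ θ + k)
    (h1 : ∀ k : ℤ, z ≠ brk1 ℓ α θ + k) :
    ∃ e : ℤ, (e = 1 ∨ e = -1) ∧ HasDerivAt (Ftrap ℓ α θ) (Lam α θ ^ e) z := by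
  obtain ⟨e, he, hev⟩ := Ftrap_loc h h0 h1
  refine ⟨e, he, ?_⟩
  have haff : HasDerivAt (fun y : ℝ => Ftrap ℓ α θ z + Lam α θ ^ e * (y - z))
      (Lam α θ ^ e) z := by
    simpa using (((hasDerivAt_id z).sub_const z).const_mul (Lam α θ ^ e)).const_add
      (Ftrap ℓ α θ z)
  exact haff.congr_of_eventuallyEq hev

/-- Joint continuity in `(θ, x)` at good points. -/
lemma Ftrap_contAt (h : Fact ℓ α θ) {z : ℝ} (h0 : ∀ k : ℤ, z ≠ brk0 ℓ θ + k)
    (h1 : ∀ k : ℤ, z ≠ brk1 ℓ α θ + k) :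
    ContinuousAt (fun P : ℝ × ℝ => Ftrap ℓ α P.1 P.2) (θ, z) := by
  have hcos : Real.cos θ ≠ 0 := h.cosθ.ne'
  have htan : ContinuousAt Real.tan θ := Real.continuousAt_tan.2 hcos
  have ht2 : (2 : ℝ) * Real.tan θ ≠ 0 := by
    have := h.t_pos; positivity
  have hbc : ContinuousAt (fun x : ℝ => brk1 ℓ α x) θ := by
    simp only [brk1]
    exact continuousAt_const.div (continuousAt_const.mul htan) ht2
  have hac : ContinuousAt (fun x : ℝ => brk0 ℓ x) θ := by
    simp only [brk0]
    exact (htan.sub continuousAt_const).div (continuousAt_const.mul htan) ht2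
  have hsin : Real.sin (θ - α) ≠ 0 := h.sinsub.ne'
  have hLc : ContinuousAt (fun x : ℝ => Lam α x) θ := by
    simp only [Lam]
    exact ((Real.continuous_sin.comp (continuous_id.add continuous_const)).continuousAt).div
      ((Real.continuous_sin.comp (continuous_id.sub continuous_const)).continuousAt) hsin
  have hLic : ContinuousAt (fun x : ℝ => (Lam α x)⁻¹) θ := hLc.inv₀ h.lam0.ne'
  have hB : ContinuousAt (fun P : ℝ × ℝ => brk1 ℓ α P.1) (θ, z) :=
    ContinuousAt.comp (g := fun x : ℝ => brk1 ℓ α x) (f := Prod.fst) hbc continuousAt_fst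
  have hA : ContinuousAt (fun P : ℝ × ℝ => brk0 ℓ P.1) (θ, z) :=
    ContinuousAt.comp (g := fun x : ℝ => brk0 ℓ x) (f := Prod.fst) hac continuousAt_fst
  have hL : ContinuousAt (fun P : ℝ × ℝ => Lam α P.1) (θ, z) :=
    ContinuousAt.comp (g := fun x : ℝ => Lam α x) (f := Prod.fst) hLc continuousAt_fst
  have hLi : ContinuousAt (fun P : ℝ × ℝ => (Lam α P.1)⁻¹) (θ, z) :=
    ContinuousAt.comp (g := fun x : ℝ => (Lam α x)⁻¹) (f := Prod.fst) hLic continuousAt_fst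
  have hb0 := h.b0lt
  have hbn := h.b1neg
  have hap := h.b0pos
  set k := ⌊z - brk1 ℓ α θ⌋ with hkdef
  have hk1 : (k : ℝ) ≤ z - brk1 ℓ α θ := Int.floor_le _
  have hk2 : z - brk1 ℓ α θ < k + 1 := Int.lt_floor_add_one _
  have hzb : brk1 ℓ α θ + k < z := by
    rcases lt_or_eq_of_le hk1 with hlt | heq
    · linarith
    · exact absurd (by linarith) (h1 k)
  have hza : z - (k : ℝ) ≠ brk0 ℓ θ := fun hc => (h0 k) (by linarith)
  -- eventual structural conditions
  have hev3 : ∀ᶠ P : ℝ × ℝ in nhds (θ, z), 0 < brk1 ℓ α P.1 + 1 - brk0 ℓ P.1 := by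
    have hc : ContinuousAt (fun P : ℝ × ℝ => brk1 ℓ α P.1 + 1 - brk0 ℓ P.1) (θ, z) :=
      (hB.add continuousAt_const).sub hA
    exact hc.eventually (eventually_gt_nhds (by simpa using (by linarith : (0:ℝ) < brk1 ℓ α θ + 1 - brk0 ℓ θ)))
  have hev4 : ∀ᶠ P : ℝ × ℝ in nhds (θ, z), 0 < brk0 ℓ P.1 - brk1 ℓ α P.1 := by
    have hc : ContinuousAt (fun P : ℝ × ℝ => brk0 ℓ P.1 - brk1 ℓ α P.1) (θ, z) := hA.sub hB
    exact hc.eventually (eventually_gt_nhds (by simpa using (by linarith : (0:ℝ) < brk0 ℓ θ - brk1 ℓ α θ)))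
  rcases lt_or_gt_of_ne hza with hlt | hgt
  · -- contracting branch
    have hev1 : ∀ᶠ P : ℝ × ℝ in nhds (θ, z), 0 < P.2 - (brk1 ℓ α P.1 + k) := by
      have hc : ContinuousAt (fun P : ℝ × ℝ => P.2 - (brk1 ℓ α P.1 + k)) (θ, z) :=
        continuousAt_snd.sub (hB.add continuousAt_const)
      exact hc.eventually (eventually_gt_nhds (by simpa using (by linarith : (0:ℝ) < z - (brk1 ℓ α θ + k))))
    have hev2 : ∀ᶠ P : ℝ × ℝ in nhds (θ, z), 0 < brk0 ℓ P.1 + k - P.2 := by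
      have hc : ContinuousAt (fun P : ℝ × ℝ => brk0 ℓ P.1 + k - P.2) (θ, z) :=
        (hA.add continuousAt_const).sub continuousAt_snd
      exact hc.eventually (eventually_gt_nhds (by simpa using (by linarith : (0:ℝ) < brk0 ℓ θ + k - z)))
    have heq : ∀ᶠ P : ℝ × ℝ in nhds (θ, z),
        Ftrap ℓ α P.1 P.2
          = -brk1 ℓ α P.1 + (Lam α P.1)⁻¹ * (P.2 - k - brk1 ℓ α P.1) + k := by
      filter_upwards [hev1, hev2, hev3] with P e1 e2 e3
      have hfl : ⌊P.2 - brk1 ℓ α P.1⌋ = k := by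
        apply Int.floor_eq_iff.2
        constructor
        · linarith
        · push_cast; linarith
      rw [Ftrap, hfl, Ftrap0, if_pos (by linarith : P.2 - (k : ℝ) ≤ brk0 ℓ P.1)]
    have hform : ContinuousAt
        (fun P : ℝ × ℝ => -brk1 ℓ α P.1 + (Lam α P.1)⁻¹ * (P.2 - k - brk1 ℓ α P.1) + k)
        (θ, z) :=
      ((hB.neg.add (hLi.mul ((continuousAt_snd.sub continuousAt_const).sub hB))).add
        continuousAt_const)
    exact hform.congr (heq.mono fun P hP => hP.symm)
  · -- expanding branch
    have hev1 : ∀ᶠ P : ℝ × ℝ in nhds (θ, z), 0 < brk1 ℓ α P.1 + k + 1 - P.2 := by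
      have hc : ContinuousAt (fun P : ℝ × ℝ => brk1 ℓ α P.1 + k + 1 - P.2) (θ, z) :=
        ((hB.add continuousAt_const).add continuousAt_const).sub continuousAt_snd
      exact hc.eventually (eventually_gt_nhds (by simpa using (by linarith : (0:ℝ) < brk1 ℓ α θ + k + 1 - z)))
    have hev2 : ∀ᶠ P : ℝ × ℝ in nhds (θ, z), 0 < P.2 - (brk0 ℓ P.1 + k) := by
      have hc : ContinuousAt (fun P : ℝ × ℝ => P.2 - (brk0 ℓ P.1 + k)) (θ, z) :=
        continuousAt_snd.sub (hA.add continuousAt_const)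
      exact hc.eventually (eventually_gt_nhds (by simpa using (by linarith : (0:ℝ) < z - (brk0 ℓ θ + k))))
    have heq : ∀ᶠ P : ℝ × ℝ in nhds (θ, z),
        Ftrap ℓ α P.1 P.2
          = 1 - brk0 ℓ P.1 + Lam α P.1 * (P.2 - k - brk0 ℓ P.1) + k := by
      filter_upwards [hev1, hev2, hev4] with P e1 e2 e4
      have hfl : ⌊P.2 - brk1 ℓ α P.1⌋ = k := by
        apply Int.floor_eq_iff.2
        constructor
        · linarith
        · push_cast; linarith
      rw [Ftrap, hfl, Ftrap0, if_neg (not_le.2 (by linarith : brk0 ℓ P.1 < P.2 - (k : ℝ)))]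
    have hform : ContinuousAt
        (fun P : ℝ × ℝ => 1 - brk0 ℓ P.1 + Lam α P.1 * (P.2 - k - brk0 ℓ P.1) + k)
        (θ, z) :=
      (((continuousAt_const.sub hA).add
        (hL.mul ((continuousAt_snd.sub continuousAt_const).sub hA))).add continuousAt_const)
    exact hform.congr (heq.mono fun P hP => hP.symm)

/-- Continuity in `θ` of the `n`-th iterate at a point with a good orbit. -/
lemma iter_contAt (h : Fact ℓ α θ) (y : ℝ) (n : ℕ)
    (horb : ∀ i : ℕ, (∀ k : ℤ, (Ftrap ℓ α θ)^[i] y ≠ brk0 ℓ θ + k) ∧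
      (∀ k : ℤ, (Ftrap ℓ α θ)^[i] y ≠ brk1 ℓ α θ + k)) :
    ContinuousAt (fun θ' : ℝ => (Ftrap ℓ α θ')^[n] y) θ := by
  induction n with
  | zero => simpa using continuousAt_const
  | succ n ih =>
    have hfun : (fun θ' : ℝ => (Ftrap ℓ α θ')^[n + 1] y)
        = fun θ' : ℝ => (fun P : ℝ × ℝ => Ftrap ℓ α P.1 P.2) (θ', (Ftrap ℓ α θ')^[n] y) := by
      funext θ'
      rw [Function.iterate_succ_apply']
    rw [hfun]
    exact ContinuousAt.comp (f := fun θ' : ℝ => (θ', (Ftrap ℓ α θ')^[n] y))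
      (Ftrap_contAt h (horb n).1 (horb n).2) (continuousAt_id.prodMk ih)

end Local

section Parity

/-- For odd `q`, the `q`-th iterate of `Ftrap` is never globally a translation:
its slope at a generic point is an odd power of `Λ > 1`. -/
lemma not_forall_iterate_eq (h : Fact ℓ α θ) {p q : ℕ} (hodd : Odd q) :
    ¬ ∀ x : ℝ, (Ftrap ℓ α θ)^[q] x = x + (p : ℝ) := by
  intro hper
  have hinj : Function.Injective (Ftrap ℓ α θ) := h.Ftrap_strictMono.injective
  set Bad : Set ℝ := (Set.range fun k : ℤ => brk0 ℓ θ + k) ∪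
    (Set.range fun k : ℤ => brk1 ℓ α θ + k) with hBadDef
  have hBadCnt : Bad.Countable := (Set.countable_range _).union (Set.countable_range _)
  have hBCnt : (⋃ i : ℕ, (Ftrap ℓ α θ)^[i] ⁻¹' Bad).Countable :=
    Set.countable_iUnion fun i => hBadCnt.preimage (hinj.iterate i)
  obtain ⟨x₀, hx₀⟩ : ∃ x : ℝ, x ∉ ⋃ i : ℕ, (Ftrap ℓ α θ)^[i] ⁻¹' Bad := by
    by_contra hall
    push_neg at hall
    exact Cardinal.not_countable_real (hBCnt.mono fun x _ => hall x)
  have horb : ∀ i : ℕ, (∀ k : ℤ, (Ftrap ℓ α θ)^[i] x₀ ≠ brk0 ℓ θ + k) ∧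
      (∀ k : ℤ, (Ftrap ℓ α θ)^[i] x₀ ≠ brk1 ℓ α θ + k) := by
    intro i
    have hi : (Ftrap ℓ α θ)^[i] x₀ ∉ Bad := by
      intro hmem
      exact hx₀ (Set.mem_iUnion.2 ⟨i, hmem⟩)
    constructor
    · intro k hk
      exact hi (Set.mem_union_left _ ⟨k, hk.symm⟩)
    · intro k hk
      exact hi (Set.mem_union_right _ ⟨k, hk.symm⟩)
  have hΛ0 : Lam α θ ≠ 0 := h.lam0.ne'
  have key : ∀ i : ℕ, ∃ m : ℤ, (m + i) % 2 = 0 ∧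
      HasDerivAt ((Ftrap ℓ α θ)^[i]) (Lam α θ ^ m) x₀ := by
    intro i
    induction i with
    | zero =>
      refine ⟨0, by norm_num, ?_⟩
      simpa using hasDerivAt_id x₀
    | succ n ih =>
      obtain ⟨m, hm, hd⟩ := ih
      obtain ⟨e, he, hde⟩ := Ftrap_hasDeriv h (horb n).1 (horb n).2
      refine ⟨e + m, ?_, ?_⟩
      · rcases he with rfl | rfl <;> (push_cast at hm ⊢; omega)
      · have hcomp := HasDerivAt.comp x₀ hde hd
        rw [Function.iterate_succ', zpow_add₀ hΛ0 e m]
        exact hcomp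
  obtain ⟨m, hm, hd⟩ := key q
  have hfun : (Ftrap ℓ α θ)^[q] = fun x : ℝ => x + (p : ℝ) := funext hper
  have hd1 : HasDerivAt ((Ftrap ℓ α θ)^[q]) 1 x₀ := by
    rw [hfun]
    simpa using (hasDerivAt_id x₀).add_const (p : ℝ)
  have hΛm : Lam α θ ^ m = 1 := hd.unique hd1
  have hm0 : m = 0 := by
    have hinj2 : Function.Injective fun n : ℤ => Lam α θ ^ n :=
      zpow_right_injective₀ h.lam0 h.lam1.ne'
    have : (fun n : ℤ => Lam α θ ^ n) m = (fun n : ℤ => Lam α θ ^ n) 0 := by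
      simpa using hΛm
    exact hinj2 this
  rw [hm0] at hm
  have : (q : ℤ) % 2 = 0 := by simpa using hm
  rcases hodd with ⟨j, hj⟩
  omega

end Parity

section Tau

lemma tau_ge (h' : Fact ℓ α θ) {x₀ : ℝ} {p q : ℕ} (hq : 0 < q)
    (hx : x₀ + (p : ℝ) ≤ (Ftrap ℓ α θ)^[q] x₀) :
    (p : ℝ) / (q : ℝ) ≤ (Flift h').translationNumber := by
  have hx' : x₀ + ((p : ℤ) : ℝ) ≤ ((Flift h' ^ q) : CircleDeg1Lift) x₀ := by
    rw [CircleDeg1Lift.coe_pow, Flift_coe]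
    push_cast
    exact hx
  have h2 := (Flift h' ^ q).le_translationNumber_of_add_int_le hx'
  rw [(Flift h').translationNumber_pow q] at h2
  rw [div_le_iff₀ (by exact_mod_cast hq : (0:ℝ) < (q:ℝ))]
  push_cast at h2
  linarith

lemma tau_le (h' : Fact ℓ α θ) {x₀ : ℝ} {p q : ℕ} (hq : 0 < q)
    (hx : (Ftrap ℓ α θ)^[q] x₀ ≤ x₀ + (p : ℝ)) :
    (Flift h').translationNumber ≤ (p : ℝ) / (q : ℝ) := by
  have hx' : ((Flift h' ^ q) : CircleDeg1Lift) x₀ ≤ x₀ + ((p : ℤ) : ℝ) := by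
    rw [CircleDeg1Lift.coe_pow, Flift_coe]
    push_cast
    exact hx
  have h2 := (Flift h' ^ q).translationNumber_le_of_le_add_int hx'
  rw [(Flift h').translationNumber_pow q] at h2
  rw [le_div_iff₀ (by exact_mod_cast hq : (0:ℝ) < (q:ℝ))]
  push_cast at h2
  linarith

end Tau

end Stmt8Aux

open Stmt8Aux

theorem stmt8 (ℓ α : ℝ) (hℓ : 0 < ℓ) (hα : 0 < α) (hα2 : α < π / 2)
    (p q : ℕ) (hq : 0 < q) (hodd : Odd q) (hpq : Nat.Coprime p q)
    (θstar : ℝ)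
    (hθstar : θstar ∈ Set.Ioo (Real.arctan (2 * ℓ + Real.tan α)) (π / 2))
    (hrot : rotationNumber (Ftrap ℓ α θstar) = (p : ℝ) / (q : ℝ)) :
    ({θ ∈ Set.Ioo (Real.arctan (2 * ℓ + Real.tan α)) (π / 2) |
        rotationNumber (Ftrap ℓ α θ) = (p : ℝ) / (q : ℝ)}.OrdConnected ∧
     (interior {θ ∈ Set.Ioo (Real.arctan (2 * ℓ + Real.tan α)) (π / 2) |
        rotationNumber (Ftrap ℓ α θ) = (p : ℝ) / (q : ℝ)}).Nonempty) ∧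
    ∀ θ ∈ Set.Ioo (Real.arctan (2 * ℓ + Real.tan α)) (π / 2),
      rotationNumber (Ftrap ℓ α θ) = (p : ℝ) / (q : ℝ) →
      ¬ ∃ H : ℝ → ℝ, Continuous H ∧ StrictMono H ∧
          (∀ x : ℝ, H (x + 1) = H x + 1) ∧
          (∀ x : ℝ, H (Ftrap ℓ α θ x) = H x + (p : ℝ) / (q : ℝ)) := by
  set lo := Real.arctan (2 * ℓ + Real.tan α) with hlodef
  set S := {θ ∈ Set.Ioo lo (π / 2) |
      rotationNumber (Ftrap ℓ α θ) = (p : ℝ) / (q : ℝ)} with hSdef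
  have hq0 : (0 : ℝ) < (q : ℝ) := by exact_mod_cast hq
  have hfact : ∀ θ' ∈ Set.Ioo lo (π / 2), Fact ℓ α θ' := fun θ' h' => mkFact hℓ hα hα2 h'
  have hstarf : Fact ℓ α θstar := hfact θstar hθstar
  -- Part 2: no conjugacy to a rotation.
  have hpart2 : ∀ θ ∈ Set.Ioo lo (π / 2),
      rotationNumber (Ftrap ℓ α θ) = (p : ℝ) / (q : ℝ) →
      ¬ ∃ H : ℝ → ℝ, Continuous H ∧ StrictMono H ∧
          (∀ x : ℝ, H (x + 1) = H x + 1) ∧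
          (∀ x : ℝ, H (Ftrap ℓ α θ x) = H x + (p : ℝ) / (q : ℝ)) := by
    rintro θ hmem - ⟨H, -, Hsm, H1, Hsemi⟩
    have h' := hfact θ hmem
    apply not_forall_iterate_eq h' (p := p) hodd
    have hHn : ∀ (n : ℕ) (y : ℝ), H (y + (n : ℝ)) = H y + (n : ℝ) := by
      intro n
      induction n with
      | zero => simp
      | succ n ih =>
        intro y
        have : y + ((n : ℝ) + 1) = (y + n) + 1 := by ring
        push_cast
        rw [this, H1, ih]
        ring
    have hHiter : ∀ (n : ℕ) (y : ℝ),
        H ((Ftrap ℓ α θ)^[n] y) = H y + (n : ℝ) * ((p : ℝ) / (q : ℝ)) := by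
      intro n
      induction n with
      | zero => simp
      | succ n ih =>
        intro y
        rw [Function.iterate_succ_apply', Hsemi, ih]
        push_cast
        ring
    intro x
    apply Hsm.injective
    rw [hHiter q x, hHn p x]
    have : (q : ℝ) * ((p : ℝ) / (q : ℝ)) = (p : ℝ) := by
      field_simp
    rw [this]
  -- translation number at θstar
  have hrateq : (Flift hstarf).translationNumber = ((p : ℤ) : ℝ) / ((q : ℕ) : ℝ) := by
    rw [← rot_eq hstarf, hrot]
    push_cast
    ring
  obtain ⟨x₀, hx₀⟩ := ((Flift hstarf).translationNumber_eq_rat_iff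
    (by exact hstarf.Ftrap_cont) hq).1 hrateq
  have hx₀' : (Ftrap ℓ α θstar)^[q] x₀ = x₀ + (p : ℝ) := by
    rw [CircleDeg1Lift.coe_pow, Flift_coe] at hx₀
    push_cast at hx₀
    exact hx₀
  -- a point where the iterate is not the translation
  obtain ⟨y₁, hy₁⟩ : ∃ y, (Ftrap ℓ α θstar)^[q] y ≠ y + (p : ℝ) := by
    by_contra hcon
    push_neg at hcon
    exact not_forall_iterate_eq hstarf hodd hcon
  have hUopen : IsOpen {y : ℝ | (Ftrap ℓ α θstar)^[q] y ≠ y + (p : ℝ)} :=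
    isOpen_ne_fun (hstarf.Ftrap_cont.iterate q) (continuous_id.add continuous_const)
  have hinj : Function.Injective (Ftrap ℓ α θstar) := hstarf.Ftrap_strictMono.injective
  have hBCnt : (⋃ i : ℕ, (Ftrap ℓ α θstar)^[i] ⁻¹'
      ((Set.range fun k : ℤ => brk0 ℓ θstar + k) ∪
        (Set.range fun k : ℤ => brk1 ℓ α θstar + k))).Countable :=
    Set.countable_iUnion fun i =>
      (((Set.countable_range _).union (Set.countable_range _)).preimage (hinj.iterate i))
  obtain ⟨y₂, hy₂c, hy₂U⟩ := (hBCnt.dense_compl ℝ).exists_mem_open hUopen ⟨y₁, hy₁⟩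
  have horb : ∀ i : ℕ, (∀ k : ℤ, (Ftrap ℓ α θstar)^[i] y₂ ≠ brk0 ℓ θstar + k) ∧
      (∀ k : ℤ, (Ftrap ℓ α θstar)^[i] y₂ ≠ brk1 ℓ α θstar + k) := by
    intro i
    have hi : (Ftrap ℓ α θstar)^[i] y₂ ∉
        ((Set.range fun k : ℤ => brk0 ℓ θstar + k) ∪
          (Set.range fun k : ℤ => brk1 ℓ α θstar + k)) := by
      intro hmem
      exact hy₂c (Set.mem_iUnion.2 ⟨i, hmem⟩)
    exact ⟨fun k hk => hi (Set.mem_union_left _ ⟨k, hk.symm⟩),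
      fun k hk => hi (Set.mem_union_right _ ⟨k, hk.symm⟩)⟩
  have hcont : ContinuousAt (fun θ' : ℝ => (Ftrap ℓ α θ')^[q] y₂) θstar :=
    iter_contAt hstarf y₂ q horb
  have hIooEv : ∀ᶠ θ' in nhds θstar, θ' ∈ Set.Ioo lo (π / 2) :=
    isOpen_Ioo.mem_nhds hθstar
  -- the two sides of the tongue
  have hstep : ∃ W : Set ℝ, IsOpen W ∧ W.Nonempty ∧ W ⊆ S := by
    rcases lt_or_gt_of_ne hy₂U with hcase | hcase
    · -- iterate below the translation at y₂ : go left of θstar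
      have hev : ∀ᶠ θ' in nhds θstar, (Ftrap ℓ α θ')^[q] y₂ < y₂ + (p : ℝ) :=
        hcont.eventually (eventually_lt_nhds hcase)
      obtain ⟨ε, hε, hball⟩ := Metric.eventually_nhds_iff.1 (hev.and hIooEv)
      refine ⟨Set.Ioo (θstar - ε) θstar, isOpen_Ioo, ⟨θstar - ε / 2, by constructor <;> linarith⟩, ?_⟩
      intro θ' hθ'
      have hd : dist θ' θstar < ε := by
        rw [Real.dist_eq, abs_lt]
        constructor <;> [linarith [hθ'.1]; linarith [hθ'.2]]
      obtain ⟨hlt', hIoo'⟩ := hball hd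
      have h' := hfact θ' hIoo'
      refine ⟨hIoo', ?_⟩
      rw [rot_eq h']
      apply le_antisymm
      · exact tau_le h' hq hlt'.le
      · have hmono : Flift hstarf ≤ Flift h' :=
          fun w => Ftrap_anti h' hstarf hθ'.2.le w
        have hit := CircleDeg1Lift.iterate_mono hmono q x₀
        rw [Flift_coe, Flift_coe] at hit
        exact tau_ge h' (x₀ := x₀) hq (by rw [← hx₀']; exact hit)
    · -- iterate above the translation at y₂ : go right of θstar
      have hev : ∀ᶠ θ' in nhds θstar, y₂ + (p : ℝ) < (Ftrap ℓ α θ')^[q] y₂ :=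
        hcont.eventually (eventually_gt_nhds hcase)
      obtain ⟨ε, hε, hball⟩ := Metric.eventually_nhds_iff.1 (hev.and hIooEv)
      refine ⟨Set.Ioo θstar (θstar + ε), isOpen_Ioo, ⟨θstar + ε / 2, by constructor <;> linarith⟩, ?_⟩
      intro θ' hθ'
      have hd : dist θ' θstar < ε := by
        rw [Real.dist_eq, abs_lt]
        constructor <;> [linarith [hθ'.1]; linarith [hθ'.2]]
      obtain ⟨hgt', hIoo'⟩ := hball hd
      have h' := hfact θ' hIoo'
      refine ⟨hIoo', ?_⟩
      rw [rot_eq h']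
      apply le_antisymm
      · have hmono : Flift h' ≤ Flift hstarf :=
          fun w => Ftrap_anti hstarf h' hθ'.1.le w
        have hit := CircleDeg1Lift.iterate_mono hmono q x₀
        rw [Flift_coe, Flift_coe] at hit
        exact tau_le h' (x₀ := x₀) hq (by rw [← hx₀']; exact hit)
      · exact tau_ge h' hq hgt'.le
  obtain ⟨W, hWopen, hWne, hWsub⟩ := hstep
  refine ⟨⟨?_, ?_⟩, hpart2⟩
  · -- OrdConnected
    refine ⟨fun x hx y hy z hz => ?_⟩
    have hxI := hx.1
    have hyI := hy.1
    have hzI : z ∈ Set.Ioo lo (π / 2) :=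
      ⟨lt_of_lt_of_le hxI.1 hz.1, lt_of_le_of_lt hz.2 hyI.2⟩
    have hxf := hfact x hxI
    have hyf := hfact y hyI
    have hzf := hfact z hzI
    refine ⟨hzI, ?_⟩
    rw [rot_eq hzf]
    have hle1 : Flift hyf ≤ Flift hzf := fun w => Ftrap_anti hzf hyf hz.2 w
    have hle2 : Flift hzf ≤ Flift hxf := fun w => Ftrap_anti hxf hzf hz.1 w
    have t1 := CircleDeg1Lift.translationNumber_mono hle1
    have t2 := CircleDeg1Lift.translationNumber_mono hle2
    have hxr : (Flift hxf).translationNumber = (p : ℝ) / (q : ℝ) := by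
      rw [← rot_eq hxf]; exact hx.2
    have hyr : (Flift hyf).translationNumber = (p : ℝ) / (q : ℝ) := by
      rw [← rot_eq hyf]; exact hy.2
    rw [hxr] at t2
    rw [hyr] at t1
    linarith
  · -- nonempty interior
    obtain ⟨w, hw⟩ := hWne
    exact ⟨w, interior_maximal hWsub hWopen hw⟩
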